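/- If there exists a surjective γ-Lipschitz map Φ from the unit ball B_{Y_n} of an n-dimensional normed space onto the unit ball B_{Z_m} of an m-dimensional normed space, then n ≥ m. -/

import Mathlib

open Metric Set Filter

variable {X : Type*} [NormedAddCommGroup X] [NormedSpace ℝ X] [CompleteSpace X]

/-- `N` is a norm on `ℝ^k`. -/
def IsNorm {k : ℕ} (N : (Fin k → ℝ) → ℝ) : Prop :=
  (∀ y, 0 ≤ N y) ∧ (∀ y, N y = 0 → y = 0) ∧
    (∀ (c : ℝ) (y), N (c • y) = |c| * N y) ∧ ∀ y z, N (y + z) ≤ N y + N z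

/-- `Φ` is `γ`-Lipschitz on the unit ball of the norm `N`. -/
def LipOnBall {k : ℕ} (N : (Fin k → ℝ) → ℝ) (γ : ℝ) (Φ : (Fin k → ℝ) → X) : Prop :=
  ∀ y y', N y ≤ 1 → N y' ≤ 1 → ‖Φ y - Φ y'‖ ≤ γ * N (y - y')

/-- `sup_{f ∈ K} inf_{‖y‖_N ≤ 1} ‖f - Φ y‖`. -/
noncomputable def approxErr (K : Set X) {k : ℕ} (N : (Fin k → ℝ) → ℝ)
    (Φ : (Fin k → ℝ) → X) : ℝ :=
  ⨆ f ∈ K, ⨅ y ∈ {y | N y ≤ 1}, ‖f - Φ y‖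

/-- The fixed Lipschitz width `d^γ(K, Y_k)_X` for the norm `N` on `ℝ^k`. -/
noncomputable def fixedLipWidth (K : Set X) {k : ℕ} (N : (Fin k → ℝ) → ℝ) (γ : ℝ) : ℝ :=
  sInf { e | ∃ Φ : (Fin k → ℝ) → X, LipOnBall N γ Φ ∧ e = approxErr K N Φ }

/-- The Lipschitz width `d_n^γ(K)_X`. -/
noncomputable def lipWidth (K : Set X) (n : ℕ) (γ : ℝ) : ℝ :=
  sInf { e | ∃ k, 1 ≤ k ∧ k ≤ n ∧
    ∃ N : (Fin k → ℝ) → ℝ, IsNorm N ∧ e = fixedLipWidth K N γ }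

/-- The Chebyshev radius `rad(K) = inf_{g ∈ X} sup_{f ∈ K} ‖f - g‖`. -/
noncomputable def chebRadius (K : Set X) : ℝ := ⨅ g : X, ⨆ f ∈ K, ‖f - g‖

/-- The entropy number `ε_n(K)_X`. -/
noncomputable def entropyNum (K : Set X) (n : ℕ) : ℝ :=
  sInf { ε | 0 < ε ∧ ∃ T : Finset X, T.card ≤ 2 ^ n ∧ K ⊆ ⋃ g ∈ T, closedBall g ε }

/-- The inner entropy number `ε̃_n(K)_X` (centers in `K`). -/
noncomputable def innerEntropyNum (K : Set X) (n : ℕ) : ℝ :=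
  sInf { ε | 0 < ε ∧ ∃ T : Finset X, ↑T ⊆ K ∧ T.card ≤ 2 ^ n ∧ K ⊆ ⋃ g ∈ T, closedBall g ε }

/-- The minimal `δ`-covering number `N_δ(K)`. -/
noncomputable def coveringNumber (K : Set X) (δ : ℝ) : ℕ :=
  sInf { m | ∃ T : Finset X, T.card = m ∧ K ⊆ ⋃ g ∈ T, closedBall g δ }

open scoped ENNReal Topology

lemma isNorm_upper {k : ℕ} {N : (Fin k → ℝ) → ℝ} (h : IsNorm N) :
    ∃ C : ℝ, 0 < C ∧ ∀ y, N y ≤ C * ‖y‖ := by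
  obtain ⟨h0, heq, hsmul, hadd⟩ := h
  have hnn : 0 ≤ ∑ i, N ((Pi.single i 1 : Fin k → ℝ)) := Finset.sum_nonneg fun i _ => h0 _
  refine ⟨(∑ i, N ((Pi.single i 1 : Fin k → ℝ))) + 1, by linarith, fun y => ?_⟩
  have hy : y = ∑ i, (y i) • (Pi.single i 1 : Fin k → ℝ) := by
    funext j
    simp [Finset.sum_apply, Pi.single_apply, Finset.sum_ite_eq']
  have hsum : N (∑ i, (y i) • (Pi.single i 1 : Fin k → ℝ)) ≤ ∑ i, N ((y i) • (Pi.single i 1 : Fin k → ℝ)) := by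
    classical
    induction (Finset.univ : Finset (Fin k)) using Finset.induction with
    | empty =>
      simp only [Finset.sum_empty]
      have := hsmul 0 0
      simpa using this.le
    | insert _ _ hx ih =>
      rw [Finset.sum_insert hx, Finset.sum_insert hx]
      exact (hadd _ _).trans (by linarith)
  calc N y ≤ ∑ i, N ((y i) • (Pi.single i 1 : Fin k → ℝ)) := by nth_rewrite 1 [hy]; exact hsum
    _ = ∑ i, |y i| * N ((Pi.single i 1 : Fin k → ℝ)) := by simp [hsmul]
    _ ≤ ∑ i, ‖y‖ * N ((Pi.single i 1 : Fin k → ℝ)) := by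
        refine Finset.sum_le_sum fun i _ => ?_
        exact mul_le_mul_of_nonneg_right (by simpa using norm_le_pi_norm y i) (h0 _)
    _ = (∑ i, N ((Pi.single i 1 : Fin k → ℝ))) * ‖y‖ := by rw [Finset.sum_mul]; exact Finset.sum_congr rfl fun i _ => mul_comm _ _
    _ ≤ ((∑ i, N ((Pi.single i 1 : Fin k → ℝ))) + 1) * ‖y‖ := by
        have : (0:ℝ) ≤ ‖y‖ := norm_nonneg y
        nlinarith

lemma isNorm_zero {k : ℕ} {N : (Fin k → ℝ) → ℝ} (h : IsNorm N) : N 0 = 0 := by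
  have := h.2.2.1 0 0
  simpa using this

lemma isNorm_lower {k : ℕ} (hk : 1 ≤ k) {N : (Fin k → ℝ) → ℝ} (h : IsNorm N) :
    ∃ c : ℝ, 0 < c ∧ ∀ y, c * ‖y‖ ≤ N y := by
  obtain ⟨C, hC, hub⟩ := isNorm_upper h
  obtain ⟨h0, heq, hsmul, hadd⟩ := h
  have hsub : ∀ a b : Fin k → ℝ, N a - N b ≤ N (a - b) := by
    intro a b
    have := hadd (a - b) b
    simp only [sub_add_cancel] at this
    linarith
  have hcont : Continuous N := by
    refine (LipschitzWith.of_dist_le_mul (K := C.toNNReal) fun a b => ?_).continuous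
    rw [Real.dist_eq, dist_eq_norm, Real.coe_toNNReal _ hC.le]
    rw [abs_sub_le_iff]
    constructor
    · exact (hsub a b).trans (hub _)
    · have : N (b - a) = N (a - b) := by
        have := hsmul (-1) (a - b)
        simpa [neg_sub] using this
      exact (hsub b a).trans (this.le.trans (hub _))
  haveI : Nonempty (Fin k) := ⟨⟨0, hk⟩⟩
  have hne : (sphere (0 : Fin k → ℝ) 1).Nonempty :=
    NormedSpace.sphere_nonempty.2 zero_le_one
  obtain ⟨y₀, hy₀, hmin⟩ := (isCompact_sphere (0 : Fin k → ℝ) 1).exists_isMinOn hne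
    hcont.continuousOn
  have hy₀norm : ‖y₀‖ = 1 := by simpa using hy₀
  have hc : 0 < N y₀ := by
    rcases (h0 y₀).lt_or_eq with h' | h'
    · exact h'
    · exfalso
      have : y₀ = 0 := heq _ h'.symm
      rw [this] at hy₀norm; simp at hy₀norm
  refine ⟨N y₀, hc, fun y => ?_⟩
  rcases eq_or_ne y 0 with rfl | hy
  · simp [isNorm_zero ⟨h0, heq, hsmul, hadd⟩]
  · have hyn : (0:ℝ) < ‖y‖ := norm_pos_iff.2 hy
    set u := ‖y‖⁻¹ • y with hu
    have hus : u ∈ sphere (0 : Fin k → ℝ) 1 := by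
      simp [hu, norm_smul, abs_of_pos (inv_pos.2 hyn), inv_mul_cancel₀ hyn.ne']
    have hyu : y = ‖y‖ • u := by
      rw [hu, smul_smul, mul_inv_cancel₀ hyn.ne', one_smul]
    have key : N y = ‖y‖ * N u := by
      conv_lhs => rw [hyu]
      rw [hsmul, abs_of_pos hyn]
    rw [key, mul_comm (N y₀) ‖y‖]
    exact mul_le_mul_of_nonneg_left (hmin hus) hyn.le


/-- if there is a surjective `γ`-Lipschitz map from the unit ball of an
`n`-dimensional normed space onto the unit ball of an `m`-dimensional normed space,
then `n ≥ m`. -/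
theorem stmt8 {n m : ℕ} (hn : 1 ≤ n) (hm : 1 ≤ m)
    (N : (Fin n → ℝ) → ℝ) (hN : IsNorm N) (M : (Fin m → ℝ) → ℝ) (hM : IsNorm M)
    (γ : ℝ) (hγ : 0 ≤ γ) (Φ : (Fin n → ℝ) → (Fin m → ℝ))
    (hlip : ∀ y y', N y ≤ 1 → N y' ≤ 1 → M (Φ y - Φ y') ≤ γ * N (y - y'))
    (hsurj : Φ '' {y | N y ≤ 1} = {z | M z ≤ 1}) :
    m ≤ n := by
  obtain ⟨C₁, hC₁, hub₁⟩ := isNorm_upper hN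
  obtain ⟨c₂, hc₂, hlb₂⟩ := isNorm_lower hm hM
  obtain ⟨C₂, hC₂, hub₂⟩ := isNorm_upper hM
  set S : Set (Fin n → ℝ) := {y | N y ≤ 1} with hS
  -- Φ is Lipschitz on S w.r.t. the sup norms
  have hLip : LipschitzOnWith (Real.toNNReal (γ * C₁ / c₂)) Φ S := by
    refine LipschitzOnWith.of_dist_le_mul fun y hy y' hy' => ?_
    rw [dist_eq_norm, dist_eq_norm, Real.coe_toNNReal _ (by positivity)]
    have h1 : c₂ * ‖Φ y - Φ y'‖ ≤ M (Φ y - Φ y') := hlb₂ _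
    have h2 : M (Φ y - Φ y') ≤ γ * N (y - y') := hlip y y' hy hy'
    have h3 : N (y - y') ≤ C₁ * ‖y - y'‖ := hub₁ _
    have h4 : c₂ * ‖Φ y - Φ y'‖ ≤ γ * (C₁ * ‖y - y'‖) := by nlinarith
    rw [div_mul_eq_mul_div, le_div_iff₀ hc₂]
    nlinarith
  have h1 : dimH (Φ '' S) ≤ dimH S := hLip.dimH_image_le
  have h2 : dimH S ≤ (n : ℝ≥0∞) := by
    calc dimH S ≤ dimH (univ : Set (Fin n → ℝ)) := dimH_mono (subset_univ S)
      _ = Module.finrank ℝ (Fin n → ℝ) := Real.dimH_univ_eq_finrank _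
      _ = (n : ℝ≥0∞) := by rw [Module.finrank_fin_fun]
  have h3 : dimH (Φ '' S) = (m : ℝ≥0∞) := by
    rw [hS, hsurj]
    have hmem : {z | M z ≤ 1} ∈ 𝓝 (0 : Fin m → ℝ) := by
      refine mem_of_superset (closedBall_mem_nhds 0 (inv_pos.2 hC₂)) fun z hz => ?_
      have hz' : ‖z‖ ≤ C₂⁻¹ := by simpa [mem_closedBall_zero_iff] using hz
      have : M z ≤ C₂ * ‖z‖ := hub₂ z
      calc M z ≤ C₂ * ‖z‖ := hub₂ z
        _ ≤ C₂ * C₂⁻¹ := by nlinarith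
        _ = 1 := mul_inv_cancel₀ hC₂.ne'
    rw [Real.dimH_of_mem_nhds hmem, Module.finrank_fin_fun]
  have : (m : ℝ≥0∞) ≤ (n : ℝ≥0∞) := h3 ▸ (h1.trans h2)
  exact_mod_cast this
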